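/- Let U ∈ U(d,ℂ) be a unitary matrix. Then the set { τ ∈ ℂ : |τ| = 1 and Im(τU) is not invertible } contains at most 2d elements. In particular, there exists τ ∈ ℂ with |τ| = 1 such that Im(τU) is an invertible real d×d matrix. -/

import Mathlib

open Matrix Polynomial Set

private lemma eval_charpoly' {d : ℕ} (M : Matrix (Fin d) (Fin d) ℂ) (t : ℂ) :
    M.charpoly.eval t = (t • (1 : Matrix (Fin d) (Fin d) ℂ) - M).det := by
  rw [Matrix.charpoly, ← Polynomial.coe_evalRingHom, RingHom.map_det]
  congr 1
  ext i j
  by_cases h : i = j <;>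
    simp [Matrix.charmatrix_apply, Matrix.one_apply, Matrix.diagonal_apply, h]

private lemma circle_infinite : {τ : ℂ | ‖τ‖ = 1}.Infinite := by
  have hIoc : (Set.Ioc (-Real.pi) Real.pi).Infinite :=
    Set.Ioc_infinite (by linarith [Real.pi_pos])
  have : Infinite ↥(Set.Ioc (-Real.pi) Real.pi) := hIoc.to_subtype
  have hinj : Function.Injective (fun z : Circle => (z : ℂ)) :=
    fun a b h => Subtype.ext h
  have : Infinite Circle := Infinite.of_injective _ Circle.argEquiv.symm.injective
  have hsub : Set.range (fun z : Circle => (z : ℂ)) ⊆ {τ : ℂ | ‖τ‖ = 1} := by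
    rintro x ⟨z, rfl⟩
    simpa using Circle.norm_coe z
  exact Set.Infinite.mono hsub (Set.infinite_range_of_injective hinj)

theorem im_tau_smul_invertible (d : ℕ) (hd : 1 ≤ d) (U : Matrix (Fin d) (Fin d) ℂ)
    (hU : U ∈ Matrix.unitaryGroup (Fin d) ℂ) :
    {τ : ℂ | ‖τ‖ = 1 ∧ ¬ IsUnit ((τ • U).map Complex.im).det}.encard ≤ (2 * d : ℕ) ∧
    ∃ τ : ℂ, ‖τ‖ = 1 ∧ IsUnit ((τ • U).map Complex.im).det := by
  set Uc : Matrix (Fin d) (Fin d) ℂ := U.map (starRingEnd ℂ) with hUc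
  set M : Matrix (Fin d) (Fin d) ℂ := star U * Uc with hM
  set q : ℂ[X] := M.charpoly.comp (X ^ 2) with hq
  have hqmonic : q.Monic :=
    (M.charpoly_monic).comp (monic_X_pow 2) (by simp [natDegree_X_pow])
  have hqne : q ≠ 0 := hqmonic.ne_zero
  have hqdeg : q.natDegree = 2 * d := by
    rw [hq, natDegree_comp, Matrix.charpoly_natDegree_eq_dim, natDegree_X_pow]
    simp [mul_comm]
  have hUstar : U * star U = 1 := Matrix.mem_unitaryGroup_iff.mp hU
  have hdetU : U.det ≠ 0 := by
    have : IsUnit U.det := by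
      apply Matrix.isUnit_det_of_right_inverse hUstar
    exact this.ne_zero
  -- key: every bad τ is a root of q
  have hkey : ∀ τ : ℂ, ‖τ‖ = 1 → ¬ IsUnit ((τ • U).map Complex.im).det →
      q.IsRoot τ := by
    intro τ hτ hni
    have hdet0 : ((τ • U).map Complex.im).det = 0 := by
      by_contra h
      exact hni (isUnit_iff_ne_zero.mpr h)
    -- complexify
    have hdetC : ((((τ • U).map Complex.im).map (Complex.ofReal)).det) = 0 := by
      have := congrArg (Complex.ofRealHom) hdet0
      rwa [RingHom.map_det, RingHom.mapMatrix_apply] at this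
    have hentry : (((τ • U).map Complex.im).map (Complex.ofReal)) =
        (2 * Complex.I)⁻¹ • (τ • U - (starRingEnd ℂ τ) • Uc) := by
      ext i j
      simp only [Matrix.map_apply, Matrix.smul_apply, Matrix.sub_apply, hUc, smul_eq_mul]
      have hz : τ * U i j - (starRingEnd ℂ) τ * (starRingEnd ℂ) (U i j)
          = ((2 * (τ * U i j).im : ℝ) : ℂ) * Complex.I := by
        rw [← RingHom.map_mul (starRingEnd ℂ)]; exact Complex.sub_conj _
      rw [hz]
      push_cast
      field_simp [Complex.I_ne_zero]
    have hdet1 : (τ • U - (starRingEnd ℂ τ) • Uc).det = 0 := by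
      have h2I : ((2 * Complex.I)⁻¹ : ℂ) ≠ 0 := by
        simp [Complex.I_ne_zero]
      rw [hentry, Matrix.det_smul] at hdetC
      exact (mul_eq_zero.mp hdetC).resolve_left (pow_ne_zero _ h2I)
    have hττ : τ * (starRingEnd ℂ τ) = 1 := by
      rw [Complex.mul_conj]
      norm_cast
      rw [← Complex.sq_norm]
      simp [hτ]
    have hdet2 : ((τ ^ 2) • U - Uc).det = 0 := by
      have : (τ ^ 2) • U - Uc = τ • (τ • U - (starRingEnd ℂ τ) • Uc) := by
        rw [smul_sub, smul_smul, smul_smul, hττ, one_smul]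
        ring_nf
      rw [this, Matrix.det_smul, hdet1, mul_zero]
    have hfact : (τ ^ 2) • U - Uc = U * ((τ ^ 2) • (1 : Matrix (Fin d) (Fin d) ℂ) - M) := by
      rw [Matrix.mul_sub, Matrix.mul_smul, Matrix.mul_one, hM, ← Matrix.mul_assoc, hUstar,
        Matrix.one_mul]
    have hdet3 : ((τ ^ 2) • (1 : Matrix (Fin d) (Fin d) ℂ) - M).det = 0 := by
      have := hdet2
      rw [hfact, Matrix.det_mul] at this
      exact (mul_eq_zero.mp this).resolve_left hdetU
    rw [Polynomial.IsRoot, hq, eval_comp, eval_pow, eval_X, eval_charpoly', hdet3]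
  set S : Set ℂ := {τ : ℂ | ‖τ‖ = 1 ∧ ¬ IsUnit ((τ • U).map Complex.im).det} with hS
  have hsub : S ⊆ (q.roots.toFinset : Set ℂ) := by
    rintro τ ⟨h1, h2⟩
    simp only [Finset.coe_sort_coe, Multiset.mem_toFinset, Finset.mem_coe]
    rw [Polynomial.mem_roots hqne]
    exact hkey τ h1 h2
  have hfin : S.Finite := Set.Finite.subset (q.roots.toFinset.finite_toSet) hsub
  constructor
  · calc S.encard ≤ (q.roots.toFinset : Set ℂ).encard := Set.encard_le_encard hsub
      _ = (q.roots.toFinset.card : ℕ∞) := Set.encard_coe_eq_coe_finsetCard _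
      _ ≤ (q.roots.card : ℕ∞) := by exact_mod_cast Multiset.toFinset_card_le _
      _ ≤ ((q.natDegree : ℕ) : ℕ∞) := by exact_mod_cast q.card_roots' 
      _ = ((2 * d : ℕ) : ℕ∞) := by rw [hqdeg]
  · obtain ⟨τ, hτmem, hτnot⟩ := (circle_infinite.diff hfin).nonempty
    refine ⟨τ, hτmem, ?_⟩
    by_contra h
    exact hτnot ⟨hτmem, h⟩
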